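/- arXiv:1502.04765 — 5 statements merged into one kernel-verified Lean document; each statement's English description precedes it below -/
import Mathlib

section
/- For real numbers ℓ₁, …, ℓ_m, define D(α) = Σ_{j=1}^m w_j(α) log(m w_j(α)), the Kullback–Leibler divergence from uniform of the tilted weights w_j(α) = exp(α ℓ_j)/Σ_{k=1}^m exp(α ℓ_k). Then D(0) = 0 and D is differentiable with D′(α) = α · Σ_{j=1}^m w_j(α) (ℓ_j − Σ_{k=1}^m w_k(α) ℓ_k)². Consequently D is nondecreasing on [0, ∞) and nonincreasing on (−∞, 0]. -/
open Finset

/-- The divergence-from-uniform of the tilted weights, `D(α) = ∑ w_j(α) log(m w_j(α))`,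
satisfies `D(0) = 0`, is differentiable with derivative
`α ∑ w_j(α)(ℓ_j − ∑ w_k(α) ℓ_k)²`, is nondecreasing on `[0, ∞)` and nonincreasing on
`(−∞, 0]`. -/
theorem tilted_kl_deriv (m : ℕ) (hm : 0 < m) (ℓ : Fin m → ℝ)
    (w : ℝ → Fin m → ℝ)
    (hw : ∀ α j, w α j = Real.exp (α * ℓ j) / ∑ k, Real.exp (α * ℓ k))
    (D : ℝ → ℝ) (hD : ∀ α, D α = ∑ j, w α j * Real.log (m * w α j)) :
    D 0 = 0 ∧
    (∀ α, HasDerivAt D (α * ∑ j, w α j * (ℓ j - ∑ k, w α k * ℓ k) ^ 2) α) ∧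
    MonotoneOn D (Set.Ici 0) ∧
    AntitoneOn D (Set.Iic 0) := by
  haveI : NeZero m := ⟨hm.ne'⟩
  set Z : ℝ → ℝ := fun α => ∑ k, Real.exp (α * ℓ k) with hZ
  set S1 : ℝ → ℝ := fun α => ∑ k, Real.exp (α * ℓ k) * ℓ k with hS1
  set S2 : ℝ → ℝ := fun α => ∑ k, Real.exp (α * ℓ k) * ℓ k * ℓ k with hS2
  have hZpos : ∀ α, 0 < Z α := fun α =>
    Finset.sum_pos (fun k _ => Real.exp_pos _) Finset.univ_nonempty
  have hZne : ∀ α, Z α ≠ 0 := fun α => (hZpos α).ne'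
  have hwpos : ∀ α j, 0 < w α j := fun α j => by
    rw [hw]; exact div_pos (Real.exp_pos _) (hZpos α)
  have hsum1 : ∀ α, ∑ j, w α j = 1 := fun α => by
    simp only [hw]
    rw [← Finset.sum_div, div_self (hZne α)]
  have hsumℓ : ∀ α, ∑ j, w α j * ℓ j = S1 α / Z α := fun α => by
    simp only [hw, hS1]
    rw [Finset.sum_div]
    exact Finset.sum_congr rfl fun j _ => by ring
  have hsumℓ2 : ∀ α, ∑ j, w α j * ℓ j * ℓ j = S2 α / Z α := fun α => by
    simp only [hw, hS2]
    rw [Finset.sum_div]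
    exact Finset.sum_congr rfl fun j _ => by ring
  -- rewrite D in closed form
  have hDF : ∀ α, D α = Real.log m + α * (S1 α / Z α) - Real.log (Z α) := by
    intro α
    rw [hD]
    have hlog : ∀ j, Real.log (m * w α j) = Real.log m + α * ℓ j - Real.log (Z α) := by
      intro j
      rw [hw, Real.log_mul (by positivity) (by positivity),
        Real.log_div (Real.exp_pos _).ne' (hZne α), Real.log_exp]
      ring
    calc (∑ j, w α j * Real.log (m * w α j))
        = ∑ j, (Real.log m * w α j + α * (w α j * ℓ j) - Real.log (Z α) * w α j) := by
          refine Finset.sum_congr rfl fun j _ => ?_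
          rw [hlog j]; ring
      _ = Real.log m * (∑ j, w α j) + α * (∑ j, w α j * ℓ j)
            - Real.log (Z α) * (∑ j, w α j) := by
          rw [Finset.sum_sub_distrib, Finset.sum_add_distrib, ← Finset.mul_sum,
            ← Finset.mul_sum, ← Finset.mul_sum]
      _ = Real.log m + α * (S1 α / Z α) - Real.log (Z α) := by
          rw [hsum1, hsumℓ]; ring
  have hZderiv : ∀ α, HasDerivAt Z (S1 α) α := by
    intro α
    exact HasDerivAt.fun_sum fun k _ =>
      ((hasDerivAt_mul_const (ℓ k)).exp)
  have hS1deriv : ∀ α, HasDerivAt S1 (S2 α) α := by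
    intro α
    exact HasDerivAt.fun_sum fun k _ =>
      (((hasDerivAt_mul_const (ℓ k)).exp).mul_const (ℓ k))
  -- derivative
  have hderiv : ∀ α, HasDerivAt D (α * ∑ j, w α j * (ℓ j - ∑ k, w α k * ℓ k) ^ 2) α := by
    intro α
    have h1 : HasDerivAt (fun α => Real.log m + α * (S1 α / Z α) - Real.log (Z α))
        (1 * (S1 α / Z α) + α * ((S2 α * Z α - S1 α * S1 α) / Z α ^ 2) - S1 α / Z α) α := by
      exact (((hasDerivAt_id α).mul (((hS1deriv α).div (hZderiv α) (hZne α)))).const_add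
        (Real.log m)).sub ((hZderiv α).log (hZne α))
    have heq : (fun α => Real.log m + α * (S1 α / Z α) - Real.log (Z α)) = D :=
      funext fun α => (hDF α).symm
    rw [heq] at h1
    convert h1 using 1
    have hvar : ∑ j, w α j * (ℓ j - ∑ k, w α k * ℓ k) ^ 2
        = S2 α / Z α - (S1 α / Z α) ^ 2 := by
      have : ∀ j, w α j * (ℓ j - S1 α / Z α) ^ 2
          = w α j * ℓ j * ℓ j - 2 * (S1 α / Z α) * (w α j * ℓ j)
            + (S1 α / Z α) ^ 2 * w α j := fun j => by ring
      rw [hsumℓ]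
      calc ∑ j, w α j * (ℓ j - S1 α / Z α) ^ 2
          = ∑ j, (w α j * ℓ j * ℓ j - 2 * (S1 α / Z α) * (w α j * ℓ j)
            + (S1 α / Z α) ^ 2 * w α j) := Finset.sum_congr rfl fun j _ => this j
        _ = (∑ j, w α j * ℓ j * ℓ j) - 2 * (S1 α / Z α) * (∑ j, w α j * ℓ j)
            + (S1 α / Z α) ^ 2 * (∑ j, w α j) := by
            rw [Finset.sum_add_distrib, Finset.sum_sub_distrib, ← Finset.mul_sum,
              ← Finset.mul_sum]
        _ = S2 α / Z α - (S1 α / Z α) ^ 2 := by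
            rw [hsumℓ2, hsumℓ, hsum1]; ring
    rw [hvar]
    field_simp
    ring
  refine ⟨?_, hderiv, ?_, ?_⟩
  · rw [hDF]
    have : Z 0 = m := by simp [hZ]
    rw [this]
    simp
  · apply monotoneOn_of_deriv_nonneg (convex_Ici 0)
    · exact Continuous.continuousOn (Differentiable.continuous fun α => (hderiv α).differentiableAt)
    · exact fun x _ => (hderiv x).differentiableAt.differentiableWithinAt
    · intro x hx
      rw [interior_Ici] at hx
      rw [(hderiv x).deriv]
      exact mul_nonneg (le_of_lt hx)
        (Finset.sum_nonneg fun j _ => mul_nonneg (hwpos x j).le (sq_nonneg _))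
  · apply antitoneOn_of_deriv_nonpos (convex_Iic 0)
    · exact Continuous.continuousOn (Differentiable.continuous fun α => (hderiv α).differentiableAt)
    · exact fun x _ => (hderiv x).differentiableAt.differentiableWithinAt
    · intro x hx
      rw [interior_Iic] at hx
      rw [(hderiv x).deriv]
      exact mul_nonpos_of_nonpos_of_nonneg (le_of_lt hx)
        (Finset.sum_nonneg fun j _ => mul_nonneg (hwpos x j).le (sq_nonneg _))
end

section
/- Let ℓ₁, …, ℓ_m be real numbers that are not all equal, and let ξ > 0. Suppose w* = (w*₁, …, w*_m), with w*_j > 0 for all j and Σ_j w*_j = 1, is a local maximizer of the linear objective w ↦ Σ_{j=1}^m w_j ℓ_j over probability vectors subject to the constraint Σ_{j=1}^m w_j log(m w_j) = ξ. Then there exist real constants α₁ and α₂ > 0 such that w*_j = α₂ exp(α₁ ℓ_j) for every j = 1, …, m; that is, the constrained maximizing weights have the exponential tilting form. -/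
open Finset
open scoped Topology

/-- Any strictly positive probability vector that locally maximizes the linear objective
`w ↦ ∑ w_j ℓ_j` subject to the divergence constraint `∑ w_j log(m w_j) = ξ`, `ξ > 0`,
has the exponential tilting form `w_j = α₂ exp(α₁ ℓ_j)` with `α₂ > 0`. -/
theorem constrained_max_is_exponential_tilt (m : ℕ) (hm : 0 < m) (ℓ : Fin m → ℝ)
    (hne : ∃ j k, ℓ j ≠ ℓ k) (ξ : ℝ) (hξ : 0 < ξ)
    (w : Fin m → ℝ) (hpos : ∀ j, 0 < w j) (hsum : ∑ j, w j = 1)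
    (hconstr : ∑ j, w j * Real.log (m * w j) = ξ)
    (hmax : IsLocalMaxOn (fun v : Fin m → ℝ => ∑ j, v j * ℓ j)
      {v : Fin m → ℝ | (∀ j, 0 < v j) ∧ (∑ j, v j = 1) ∧
        (∑ j, v j * Real.log (m * v j) = ξ)} w) :
    ∃ α₁ α₂ : ℝ, 0 < α₂ ∧ ∀ j, w j = α₂ * Real.exp (α₁ * ℓ j) := by
  classical
  -- constraint functions and their derivatives
  set f : Fin 2 → (Fin m → ℝ) → ℝ :=
    ![fun v => ∑ j, v j, fun v => ∑ j, v j * Real.log (m * v j)] with hf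
  set f' : Fin 2 → (Fin m → ℝ) →L[ℝ] ℝ :=
    ![∑ j, ContinuousLinearMap.proj j,
      ∑ j, (1 + Real.log (m * w j)) • (ContinuousLinearMap.proj j :
        (Fin m → ℝ) →L[ℝ] ℝ)] with hf'
  set φ' : (Fin m → ℝ) →L[ℝ] ℝ :=
    ∑ j, ℓ j • (ContinuousLinearMap.proj j : (Fin m → ℝ) →L[ℝ] ℝ) with hφ'
  have hproj : ∀ j : Fin m, HasStrictFDerivAt (fun v : Fin m → ℝ => v j)
      (ContinuousLinearMap.proj j : (Fin m → ℝ) →L[ℝ] ℝ) w := fun j => by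
    exact (ContinuousLinearMap.proj j : (Fin m → ℝ) →L[ℝ] ℝ).hasStrictFDerivAt
  have hder0 : HasStrictFDerivAt (f 0) (f' 0) w := by
    simp only [hf, hf', Matrix.cons_val_zero]
    exact HasStrictFDerivAt.fun_sum fun j _ => hproj j
  have hder1 : HasStrictFDerivAt (f 1) (f' 1) w := by
    simp only [hf, hf', Matrix.cons_val_one, Matrix.head_cons, Matrix.cons_val_zero]
    refine HasStrictFDerivAt.fun_sum fun j _ => ?_
    have hwj : w j ≠ 0 := (hpos j).ne'
    have hmw : (m : ℝ) * w j ≠ 0 := by positivity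
    have hlog : HasStrictDerivAt (fun t : ℝ => Real.log (m * t)) (1 / w j) (w j) := by
      have h1 : HasStrictDerivAt (fun t : ℝ => (m : ℝ) * t) (m : ℝ) (w j) := by
        simpa using (hasStrictDerivAt_id (w j)).const_mul (m : ℝ)
      have h2 := (Real.hasStrictDerivAt_log hmw).comp (w j) h1
      refine h2.congr_deriv ?_
      field_simp
    have hg : HasStrictDerivAt (fun t : ℝ => t * Real.log (m * t))
        (1 + Real.log (m * w j)) (w j) := by
      have h3 := (hasStrictDerivAt_id (w j)).mul hlog
      refine h3.congr_deriv ?_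
      field_simp
      simp only [id]
      ring
    exact hg.comp_hasStrictFDerivAt w (hproj j)
  have hφder : HasStrictFDerivAt (fun v : Fin m → ℝ => ∑ j, v j * ℓ j) φ' w := by
    simp only [hφ']
    refine HasStrictFDerivAt.fun_sum fun j _ => ?_
    simpa [smul_eq_mul, mul_comm] using (hproj j).mul_const (ℓ j)
  -- transfer the local max to the pure constraint set
  have hU : IsOpen {v : Fin m → ℝ | ∀ j, 0 < v j} := by
    have : {v : Fin m → ℝ | ∀ j, 0 < v j} = ⋂ j, (fun v : Fin m → ℝ => v j) ⁻¹' Set.Ioi 0 := by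
      ext v; simp
    rw [this]
    exact isOpen_iInter_of_finite fun j => (continuous_apply j).isOpen_preimage _ isOpen_Ioi
  have hseteq : {x : Fin m → ℝ | ∀ i, f i x = f i w} =
      {v : Fin m → ℝ | (∑ j, v j = 1) ∧ (∑ j, v j * Real.log (m * v j) = ξ)} := by
    ext v
    simp only [Set.mem_setOf_eq, Fin.forall_fin_two, hf, Matrix.cons_val_zero,
      Matrix.cons_val_one, Matrix.head_cons, hsum, hconstr]
  have hkey : 𝓝[{x : Fin m → ℝ | ∀ i, f i x = f i w}] w =
      𝓝[{v : Fin m → ℝ | (∀ j, 0 < v j) ∧ (∑ j, v j = 1) ∧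
        (∑ j, v j * Real.log (m * v j) = ξ)}] w := by
    rw [hseteq]
    have : {v : Fin m → ℝ | (∀ j, 0 < v j) ∧ (∑ j, v j = 1) ∧
        (∑ j, v j * Real.log (m * v j) = ξ)} =
        {v : Fin m → ℝ | ∀ j, 0 < v j} ∩
        {v : Fin m → ℝ | (∑ j, v j = 1) ∧ (∑ j, v j * Real.log (m * v j) = ξ)} := by
      ext v; simp [Set.mem_setOf_eq, and_assoc]
    rw [this]
    exact (nhdsWithin_inter_of_mem
      (mem_nhdsWithin_of_mem_nhds (hU.mem_nhds fun j => hpos j))).symm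
  have hextr : IsLocalExtrOn (fun v : Fin m → ℝ => ∑ j, v j * ℓ j)
      {x : Fin m → ℝ | ∀ i, f i x = f i w} w := by
    right
    show IsMaxFilter _ _ _
    rw [hkey]
    exact hmax
  obtain ⟨Λ, Λ₀, hΛne, hΛ⟩ := hextr.exists_multipliers_of_hasStrictFDerivAt
    (f' := f') (fun i => by fin_cases i <;> [exact hder0; exact hder1]) hφder
  -- evaluate the multiplier identity at basis vectors
  have heval : ∀ k : Fin m,
      Λ 0 + Λ 1 * (1 + Real.log (m * w k)) + Λ₀ * ℓ k = 0 := by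
    intro k
    have := DFunLike.congr_fun hΛ (Pi.single k (1 : ℝ))
    simp only [Fin.sum_univ_two, ContinuousLinearMap.add_apply, ContinuousLinearMap.smul_apply,
      ContinuousLinearMap.zero_apply, hf', hφ', Matrix.cons_val_zero, Matrix.cons_val_one,
      Matrix.head_cons, ContinuousLinearMap.sum_apply, ContinuousLinearMap.proj_apply,
      Pi.single_apply, smul_eq_mul, mul_ite, mul_one, mul_zero,
      Finset.sum_ite_eq', Finset.mem_univ, if_true] at this
    linarith [this]
  -- the multiplier on the divergence constraint is nonzero
  have hΛ1 : Λ 1 ≠ 0 := by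
    intro h1
    obtain ⟨j, k, hjk⟩ := hne
    have hj := heval j
    have hk := heval k
    rw [h1] at hj hk
    have hΛ₀ : Λ₀ = 0 := by
      by_contra h0
      apply hjk
      have : Λ₀ * ℓ j = Λ₀ * ℓ k := by linarith
      exact mul_left_cancel₀ h0 this
    have hΛ0 : Λ 0 = 0 := by rw [hΛ₀] at hj; linarith
    apply hΛne
    ext x
    · exact Fin.cases hΛ0 (fun i => by fin_cases i <;> simp [h1, hΛ0]) x
    · exact hΛ₀
  -- solve for the weights
  have hm0 : (0:ℝ) < m := by exact_mod_cast hm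
  refine ⟨-Λ₀ / Λ 1, Real.exp (-(Λ 0 + Λ 1) / Λ 1) / m, by positivity, fun k => ?_⟩
  have hmwk : (0 : ℝ) < m * w k := mul_pos hm0 (hpos k)
  have hlogk : Real.log (m * w k) = -(Λ 0 + Λ 1) / Λ 1 + (-Λ₀ / Λ 1) * ℓ k := by
    have := heval k
    field_simp
    ring_nf
    ring_nf at this
    linarith
  have : (m : ℝ) * w k = Real.exp (-(Λ 0 + Λ 1) / Λ 1) * Real.exp ((-Λ₀ / Λ 1) * ℓ k) := by
    rw [← Real.exp_add, ← hlogk, Real.exp_log hmwk]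
  have hm' : (m : ℝ) ≠ 0 := by positivity
  field_simp at this ⊢
  linarith [this]
end

section
/- (Lemma 1.) Let Θ ⊆ ℝ^p be open, let ℓ_j : Θ → ℝ (j = 1, …, m) and α₁ : Θ → ℝ be differentiable, define the tilted weights w_j(θ) = exp(α₁(θ) ℓ_j(θ))/Σ_{k=1}^m exp(α₁(θ) ℓ_k(θ)) and the composite objective ℓ(θ) = Σ_{j=1}^m w_j(θ) ℓ_j(θ). If the divergence constraint Σ_{j=1}^m w_j(θ) log(m w_j(θ)) = ξ holds identically in θ on Θ for a fixed constant ξ, then for every θ ∈ Θ one has α₁(θ) · ( ∇_θ ℓ(θ) − Σ_{j=1}^m w_j(θ) ∇_θ ℓ_j(θ) ) = 0; in particular, at every θ with α₁(θ) ≠ 0 the gradient of the composite objective equals the weighted sum of the gradients: ∇_θ ℓ(θ) = Σ_{j=1}^m w_j(θ) ∇_θ ℓ_j(θ). -/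
open Finset

/-- Lemma 1: if the divergence constraint `∑ w_j(θ) log(m w_j(θ)) = ξ` holds identically
on the open set `Θ`, then `α₁(θ) (∇ℓ(θ) − ∑ w_j(θ) ∇ℓ_j(θ)) = 0` on `Θ`; in particular,
where `α₁(θ) ≠ 0` the gradient of the composite objective is the weighted sum of the
gradients of the components. -/
theorem lemma1_gradient_identity (p m : ℕ) (hm : 0 < m)
    (Θ : Set (EuclideanSpace ℝ (Fin p))) (hΘ : IsOpen Θ)
    (ℓ : Fin m → EuclideanSpace ℝ (Fin p) → ℝ)
    (α₁ : EuclideanSpace ℝ (Fin p) → ℝ)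
    (hℓdiff : ∀ j, ∀ θ ∈ Θ, DifferentiableAt ℝ (ℓ j) θ)
    (hαdiff : ∀ θ ∈ Θ, DifferentiableAt ℝ α₁ θ)
    (w : Fin m → EuclideanSpace ℝ (Fin p) → ℝ)
    (hw : ∀ j θ, w j θ = Real.exp (α₁ θ * ℓ j θ) / ∑ k, Real.exp (α₁ θ * ℓ k θ))
    (L : EuclideanSpace ℝ (Fin p) → ℝ)
    (hL : ∀ θ, L θ = ∑ j, w j θ * ℓ j θ)
    (ξ : ℝ)
    (hconstr : ∀ θ ∈ Θ, ∑ j, w j θ * Real.log (m * w j θ) = ξ) :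
    ∀ θ ∈ Θ,
      α₁ θ • (fderiv ℝ L θ - ∑ j, w j θ • fderiv ℝ (ℓ j) θ) = 0 ∧
      (α₁ θ ≠ 0 → fderiv ℝ L θ = ∑ j, w j θ • fderiv ℝ (ℓ j) θ) := by
  intro θ hθ
  haveI : Nonempty (Fin m) := Fin.pos_iff_nonempty.mp hm
  -- the partition function
  set Z : EuclideanSpace ℝ (Fin p) → ℝ := fun t => ∑ k, Real.exp (α₁ t * ℓ k t) with hZdef
  have hZpos : ∀ t, 0 < Z t := fun t =>
    Finset.sum_pos (fun k _ => Real.exp_pos _) Finset.univ_nonempty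
  set A := fderiv ℝ α₁ θ with hA
  set D : Fin m → (EuclideanSpace ℝ (Fin p)) →L[ℝ] ℝ := fun k => fderiv ℝ (ℓ k) θ with hD
  have hαθ := (hαdiff θ hθ).hasFDerivAt
  have hprod : ∀ k : Fin m,
      HasFDerivAt (fun t => α₁ t * ℓ k t) (α₁ θ • D k + ℓ k θ • A) θ :=
    fun k => hαθ.mul (hℓdiff k θ hθ).hasFDerivAt
  have hexp : ∀ k : Fin m, HasFDerivAt (fun t => Real.exp (α₁ t * ℓ k t))
      (Real.exp (α₁ θ * ℓ k θ) • (α₁ θ • D k + ℓ k θ • A)) θ := fun k => (hprod k).exp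
  have hZder : HasFDerivAt Z
      (∑ k, Real.exp (α₁ θ * ℓ k θ) • (α₁ θ • D k + ℓ k θ • A)) θ :=
    HasFDerivAt.fun_sum (fun k _ => hexp k)
  have hwdiff : ∀ j, DifferentiableAt ℝ (w j) θ := by
    intro j
    have hwj : w j = fun t => Real.exp (α₁ t * ℓ j t) * (Z t)⁻¹ := funext fun t => by
      rw [hw j t, div_eq_mul_inv]
    rw [hwj]
    have h1 : DifferentiableAt ℝ (fun t => Real.exp (α₁ t * ℓ j t)) θ :=
      (hexp j).differentiableAt
    have h2 : DifferentiableAt ℝ Z θ := hZder.differentiableAt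
    exact h1.mul (h2.inv (hZpos θ).ne')
  have hLdiff : DifferentiableAt ℝ L θ := by
    have hLf : L = fun t => ∑ j, w j t * ℓ j t := funext hL
    rw [hLf]
    exact DifferentiableAt.fun_sum fun j _ => (hwdiff j).mul (hℓdiff j θ hθ)
  set B := fderiv ℝ L θ with hB
  have hBder : HasFDerivAt L B θ := hLdiff.hasFDerivAt
  -- positivity and log computations for weights
  have hwpos : ∀ j t, 0 < w j t := fun j t => by
    rw [hw j t]; exact div_pos (Real.exp_pos _) (hZpos t)
  have hlogw : ∀ j t, Real.log (w j t) = α₁ t * ℓ j t - Real.log (Z t) := fun j t => by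
    rw [hw j t, Real.log_div (Real.exp_ne_zero _) (hZpos t).ne', Real.log_exp]
  have hsum1 : ∀ t, ∑ j, w j t = 1 := fun t => by
    simp only [hw]
    rw [← Finset.sum_div]
    exact div_self (hZpos t).ne'
  -- the constraint implies α₁ L - log Z is constant on Θ
  have hFconst : ∀ t ∈ Θ, α₁ t * L t - Real.log (Z t) = ξ - Real.log m := by
    intro t ht
    have hm0 : (m : ℝ) ≠ 0 := Nat.cast_ne_zero.mpr hm.ne'
    have h1 : ∑ j, w j t * Real.log (m * w j t)
        = ∑ j, (w j t * Real.log m + α₁ t * (w j t * ℓ j t) - w j t * Real.log (Z t)) := by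
      refine Finset.sum_congr rfl fun j _ => ?_
      rw [Real.log_mul hm0 (hwpos j t).ne', hlogw j t]
      ring
    have h2 := hconstr t ht
    rw [h1, Finset.sum_sub_distrib, Finset.sum_add_distrib, ← Finset.sum_mul,
      ← Finset.mul_sum, ← Finset.sum_mul, hsum1 t, one_mul, one_mul, ← hL t] at h2
    linarith
  -- derivative of the constant function
  have hFder : HasFDerivAt (fun t => α₁ t * L t - Real.log (Z t))
      ((α₁ θ • B + L θ • A)
        - (Z θ)⁻¹ • (∑ k, Real.exp (α₁ θ * ℓ k θ) • (α₁ θ • D k + ℓ k θ • A))) θ :=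
    (hαθ.mul hBder).sub (hZder.log (hZpos θ).ne')
  have hF0 : HasFDerivAt (fun t => α₁ t * L t - Real.log (Z t))
      (0 : EuclideanSpace ℝ (Fin p) →L[ℝ] ℝ) θ :=
    (hasFDerivAt_const (ξ - Real.log m) θ).congr_of_eventuallyEq
      (Filter.eventuallyEq_of_mem (hΘ.mem_nhds hθ) hFconst)
  have hkey := hFder.unique hF0
  -- simplify the partition-function derivative term
  have hDZ : (Z θ)⁻¹ • (∑ k, Real.exp (α₁ θ * ℓ k θ) • (α₁ θ • D k + ℓ k θ • A))
      = α₁ θ • (∑ k, w k θ • D k) + L θ • A := by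
    rw [Finset.smul_sum]
    have hterm : ∀ k : Fin m,
        (Z θ)⁻¹ • (Real.exp (α₁ θ * ℓ k θ) • (α₁ θ • D k + ℓ k θ • A))
          = α₁ θ • (w k θ • D k) + (w k θ * ℓ k θ) • A := by
      intro k
      have hwk : w k θ = (Z θ)⁻¹ * Real.exp (α₁ θ * ℓ k θ) := by
        rw [hw k θ, div_eq_inv_mul]
      simp only [smul_add, smul_smul]
      rw [hwk]
      congr 1 <;> congr 1 <;> ring
    rw [Finset.sum_congr rfl fun k _ => hterm k, Finset.sum_add_distrib,
      ← Finset.smul_sum, ← Finset.sum_smul, ← hL θ]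
  rw [hDZ] at hkey
  have hkey2 : α₁ θ • (B - ∑ j, w j θ • D j) = 0 := by
    rw [smul_sub, sub_eq_zero]
    exact add_right_cancel (sub_eq_zero.mp hkey)
  refine ⟨hkey2, fun hα => ?_⟩
  have h3 := congrArg (fun x => (α₁ θ)⁻¹ • x) hkey2
  simp only [smul_smul, inv_mul_cancel₀ hα, one_smul, smul_zero] at h3
  exact sub_eq_zero.mp h3
end

section
/- Let Θ ⊆ ℝ^p be open, let ℓ_j : Θ → ℝ (j = 1, …, m) and α₁ : Θ → ℝ be differentiable, define the tilted weights w_j(θ) = exp(α₁(θ) ℓ_j(θ))/Σ_{k=1}^m exp(α₁(θ) ℓ_k(θ)) and the composite objective ℓ(θ) = Σ_{j=1}^m w_j(θ) ℓ_j(θ). Then for every θ ∈ Θ the gradient of the composite objective obeys the exact decomposition ∇_θ ℓ(θ) = ( Σ_{j=1}^m w_j(θ) (ℓ_j(θ) − ℓ(θ))² ) ∇_θ α₁(θ) + α₁(θ) Σ_{j=1}^m w_j(θ) (ℓ_j(θ) − ℓ(θ)) ∇_θ ℓ_j(θ) + Σ_{j=1}^m w_j(θ) ∇_θ ℓ_j(θ),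 where the first coefficient Σ_j w_j(θ)(ℓ_j(θ) − ℓ(θ))² is the weighted dispersion of the components ℓ_j(θ) around ℓ(θ). -/
open Finset

/-- Exact decomposition of the gradient of the composite objective
`ℓ(θ) = ∑ w_j(θ) ℓ_j(θ)` with tilted weights: the gradient equals the weighted dispersion
of the components times `∇α₁`, plus `α₁ ∑ w_j (ℓ_j − ℓ) ∇ℓ_j`, plus `∑ w_j ∇ℓ_j`. -/
theorem gradient_decomposition (p m : ℕ) (hm : 0 < m)
    (Θ : Set (EuclideanSpace ℝ (Fin p))) (hΘ : IsOpen Θ)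
    (ℓ : Fin m → EuclideanSpace ℝ (Fin p) → ℝ)
    (α₁ : EuclideanSpace ℝ (Fin p) → ℝ)
    (hℓdiff : ∀ j, ∀ θ ∈ Θ, DifferentiableAt ℝ (ℓ j) θ)
    (hαdiff : ∀ θ ∈ Θ, DifferentiableAt ℝ α₁ θ)
    (w : Fin m → EuclideanSpace ℝ (Fin p) → ℝ)
    (hw : ∀ j θ, w j θ = Real.exp (α₁ θ * ℓ j θ) / ∑ k, Real.exp (α₁ θ * ℓ k θ))
    (L : EuclideanSpace ℝ (Fin p) → ℝ)
    (hL : ∀ θ, L θ = ∑ j, w j θ * ℓ j θ) :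
    ∀ θ ∈ Θ,
      fderiv ℝ L θ =
        (∑ j, w j θ * (ℓ j θ - L θ) ^ 2) • fderiv ℝ α₁ θ
          + α₁ θ • ∑ j, (w j θ * (ℓ j θ - L θ)) • fderiv ℝ (ℓ j) θ
          + ∑ j, w j θ • fderiv ℝ (ℓ j) θ := by
  intro θ hθ
  have : Nonempty (Fin m) := ⟨⟨0, hm⟩⟩
  have hA : HasFDerivAt α₁ (fderiv ℝ α₁ θ) θ := (hαdiff θ hθ).hasFDerivAt
  have hDj : ∀ j, HasFDerivAt (ℓ j) (fderiv ℝ (ℓ j) θ) θ := fun j => (hℓdiff j θ hθ).hasFDerivAt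
  set A := fderiv ℝ α₁ θ with hAdef
  set D : Fin m → (EuclideanSpace ℝ (Fin p) →L[ℝ] ℝ) := fun j => fderiv ℝ (ℓ j) θ with hDdef
  set e : Fin m → ℝ := fun j => Real.exp (α₁ θ * ℓ j θ) with hedef
  set S : ℝ := ∑ k, e k with hSdef
  set N : ℝ := ∑ k, e k * ℓ k θ with hNdef
  have hSpos : 0 < S := Finset.sum_pos (fun k _ => Real.exp_pos _) univ_nonempty
  have hSne : S ≠ 0 := ne_of_gt hSpos
  have hE : ∀ j, HasFDerivAt (fun x => Real.exp (α₁ x * ℓ j x))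
      (e j • (α₁ θ • D j + ℓ j θ • A)) θ := fun j => (hA.mul (hDj j)).exp
  have hSf : HasFDerivAt (fun x => ∑ k, Real.exp (α₁ x * ℓ k x))
      (∑ j, e j • (α₁ θ • D j + ℓ j θ • A)) θ := HasFDerivAt.fun_sum fun j _ => hE j
  have hNf : HasFDerivAt (fun x => ∑ k, Real.exp (α₁ x * ℓ k x) * ℓ k x)
      (∑ j, (e j • D j + ℓ j θ • (e j • (α₁ θ • D j + ℓ j θ • A)))) θ :=
    HasFDerivAt.fun_sum fun j _ => (hE j).mul (hDj j)
  have hLfun : L = fun x => (∑ k, Real.exp (α₁ x * ℓ k x) * ℓ k x) *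
      (∑ k, Real.exp (α₁ x * ℓ k x))⁻¹ := by
    funext x
    rw [hL x, Finset.sum_mul]
    exact Finset.sum_congr rfl fun k _ => by rw [hw, div_eq_mul_inv]; ring
  have hInv : HasFDerivAt (fun x => (∑ k, Real.exp (α₁ x * ℓ k x))⁻¹)
      ((-(ContinuousLinearMap.mulLeftRight ℝ ℝ S⁻¹ S⁻¹)).comp
        (∑ j, e j • (α₁ θ • D j + ℓ j θ • A))) θ := (hasFDerivAt_inv' hSne).comp θ hSf
  have hLd : HasFDerivAt L
      (N • ((-(ContinuousLinearMap.mulLeftRight ℝ ℝ S⁻¹ S⁻¹)).comp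
          (∑ j, e j • (α₁ θ • D j + ℓ j θ • A)))
        + S⁻¹ • (∑ j, (e j • D j + ℓ j θ • (e j • (α₁ θ • D j + ℓ j θ • A))))) θ := by
    rw [hLfun]; exact hNf.mul hInv
  have hLθ : L θ = N * S⁻¹ := by rw [hLfun]
  rw [hLd.fderiv]
  simp only [hw, hLθ]
  have hee : ∀ j, Real.exp (α₁ θ * ℓ j θ) = e j := fun j => rfl
  have hSS : (∑ k, Real.exp (α₁ θ * ℓ k θ)) = S := rfl
  have hDD : ∀ j, fderiv ℝ (ℓ j) θ = D j := fun j => rfl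
  ext v
  simp only [ContinuousLinearMap.add_apply, ContinuousLinearMap.coe_smul', Pi.smul_apply,
    ContinuousLinearMap.coe_comp', Function.comp_apply, ContinuousLinearMap.coe_sum',
    Finset.sum_apply, ContinuousLinearMap.neg_apply, ContinuousLinearMap.mulLeftRight_apply,
    smul_eq_mul, hee, hSS, hDD]
  clear_value A D e S N
  set y := A v with hy
  set P : ℝ := ∑ j, e j * ℓ j θ ^ 2 with hP
  set U : ℝ := ∑ j, e j * (D j) v with hU
  set V : ℝ := ∑ j, e j * ℓ j θ * (D j) v with hV
  clear_value y P U V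
  have h1 : ∑ j, e j * (α₁ θ * (D j) v + ℓ j θ * y) = α₁ θ * U + N * y := by
    calc ∑ j, e j * (α₁ θ * (D j) v + ℓ j θ * y)
        = ∑ j, (α₁ θ * (e j * (D j) v) + (e j * ℓ j θ) * y) :=
          Finset.sum_congr rfl fun j _ => by ring
      _ = α₁ θ * U + N * y := by
          rw [Finset.sum_add_distrib, ← Finset.mul_sum, ← Finset.sum_mul, hU, hNdef]
  have h2 : ∑ j, (e j * (D j) v + ℓ j θ * (e j * (α₁ θ * (D j) v + ℓ j θ * y)))
      = U + α₁ θ * V + P * y := by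
    calc ∑ j, (e j * (D j) v + ℓ j θ * (e j * (α₁ θ * (D j) v + ℓ j θ * y)))
        = ∑ j, (e j * (D j) v + α₁ θ * (e j * ℓ j θ * (D j) v) + (e j * ℓ j θ ^ 2) * y) :=
          Finset.sum_congr rfl fun j _ => by ring
      _ = U + α₁ θ * V + P * y := by
          rw [Finset.sum_add_distrib, Finset.sum_add_distrib, ← Finset.mul_sum,
            ← Finset.sum_mul, hU, hV, hP]
  have h3 : ∑ j, e j / S * (ℓ j θ - N * S⁻¹) ^ 2
      = ((1/S) * P - (2*N/S^2) * N) + (N^2/S^3) * S := by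
    calc ∑ j, e j / S * (ℓ j θ - N * S⁻¹) ^ 2
        = ∑ j, (((1/S) * (e j * ℓ j θ ^ 2) - (2*N/S^2) * (e j * ℓ j θ)) + (N^2/S^3) * e j) :=
          Finset.sum_congr rfl fun j _ => by ring
      _ = ((1/S) * P - (2*N/S^2) * N) + (N^2/S^3) * S := by
          rw [Finset.sum_add_distrib, Finset.sum_sub_distrib, ← Finset.mul_sum, ← Finset.mul_sum,
            ← Finset.mul_sum, hP, hNdef, hSdef]
  have h4 : ∑ j, e j / S * (ℓ j θ - N * S⁻¹) * (D j) v = (1/S) * V - (N/S^2) * U := by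
    calc ∑ j, e j / S * (ℓ j θ - N * S⁻¹) * (D j) v
        = ∑ j, ((1/S) * (e j * ℓ j θ * (D j) v) - (N/S^2) * (e j * (D j) v)) :=
          Finset.sum_congr rfl fun j _ => by ring
      _ = (1/S) * V - (N/S^2) * U := by
          rw [Finset.sum_sub_distrib, ← Finset.mul_sum, ← Finset.mul_sum, hU, hV]
  have h5 : ∑ j, e j / S * (D j) v = (1/S) * U := by
    calc ∑ j, e j / S * (D j) v
        = ∑ j, (1/S) * (e j * (D j) v) := Finset.sum_congr rfl fun j _ => by ring
      _ = (1/S) * U := by rw [← Finset.mul_sum, hU]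
  rw [← hSdef, h1, h2, h3, h4, h5]
  field_simp
  ring
end

section
/- (Proposition 2, asymptotic normality via the sandwich argument.) Let (Ω, F, P) be a probability space, Θ ⊆ ℝ^p open, θ* ∈ Θ. For each n let u_n : Ω × Θ → ℝ^p be a random field that is twice continuously differentiable in θ, and let θ̂_n : Ω → Θ be measurable with u_n(ω, θ̂_n(ω)) = 0 for all ω. Assume: (i) θ̂_n → θ* in probability; (ii) √n · u_n(·, θ*) converges in distribution to the p-variate Gaussian N_p(0, K) for a positive semidefinite matrix K; (iii) the Jacobian ∇_θ u_n(·, θ*) converges in probability to an invertible p × p matrix A; (iv) there exist a neighborhood B of θ* and a constant κ such that P( sup_{θ∈B} ‖∇²_θ u_n(·, θ)‖ ≤ κ ) → 1 as n → ∞. Then √n (θ̂_n − θ*) converges in distribution to the p-variate Gaussian N_p(0, A⁻¹ K (A⁻¹)ᵀ). -/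
open Filter Topology MeasureTheory Matrix

/-- `X_n` converges in distribution (weakly) to the law `γ` under `μ`: expectations of
every bounded continuous function converge. -/
def TendstoInDistribution {Ω E : Type*} [MeasurableSpace Ω] [MeasurableSpace E] [TopologicalSpace E]
    (X : ℕ → Ω → E) (μ : Measure Ω) (γ : Measure E) : Prop :=
  ∀ f : BoundedContinuousFunction E ℝ,
    Tendsto (fun n => ∫ ω, f (X n ω) ∂μ) atTop (𝓝 (∫ x, f x ∂γ))

/-- `γ` is the centered `p`-variate Gaussian law with covariance matrix `K`: every linear
functional `x ↦ ∑ v_i x_i` pushes `γ` forward to the real Gaussian `N(0, vᵀ K v)`. -/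
def IsCenteredGaussianCov {p : ℕ} (γ : Measure (EuclideanSpace ℝ (Fin p)))
    (K : Matrix (Fin p) (Fin p) ℝ) : Prop :=
  ∀ v : Fin p → ℝ,
    γ.map (fun x => ∑ i, v i * x i)
      = ProbabilityTheory.gaussianReal 0 (Real.toNNReal (v ⬝ᵥ K.mulVec v))

namespace DMCLE
variable {p : ℕ}

local notation "E" => EuclideanSpace ℝ (Fin p)

lemma coord_abs_le_norm (x : E) (i : Fin p) : |x i| ≤ ‖x‖ := by
  rw [EuclideanSpace.norm_eq]
  have h1 : |x i| = Real.sqrt (‖x i‖ ^ 2) := by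
    rw [Real.sqrt_sq_eq_abs]; simp [abs_abs]
  rw [h1]
  apply Real.sqrt_le_sqrt
  exact Finset.single_le_sum (f := fun j => ‖x j‖ ^ 2) (fun j _ => by positivity) (Finset.mem_univ i)

lemma norm_le_sum_abs (x : E) : ‖x‖ ≤ ∑ i, |x i| := by
  rw [EuclideanSpace.norm_eq]
  have h : ∑ i, ‖x i‖ ^ 2 ≤ (∑ i, |x i|) ^ 2 := by
    have h2 : ∑ i, ‖x i‖ ^ 2 ≤ ∑ i, |x i| * ∑ j, |x j| := by
      apply Finset.sum_le_sum
      intro i _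
      have h1 : ‖x i‖ ^ 2 = |x i| * |x i| := by
        rw [Real.norm_eq_abs, sq]
      rw [h1]
      apply mul_le_mul_of_nonneg_left _ (abs_nonneg _)
      exact Finset.single_le_sum (f := fun j => |x j|) (fun j _ => abs_nonneg _) (Finset.mem_univ i)
    calc ∑ i, ‖x i‖ ^ 2 ≤ ∑ i, |x i| * ∑ j, |x j| := h2
      _ = (∑ i, |x i|) ^ 2 := by rw [← Finset.sum_mul]; ring
  calc Real.sqrt (∑ i, ‖x i‖ ^ 2) ≤ Real.sqrt ((∑ i, |x i|) ^ 2) := Real.sqrt_le_sqrt h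
    _ = abs (∑ i, |x i|) := Real.sqrt_sq_eq_abs _
    _ = ∑ i, |x i| := abs_of_nonneg (Finset.sum_nonneg fun i _ => abs_nonneg _)

lemma eq_sum_single (x : E) : x = ∑ j, x j • EuclideanSpace.single j (1:ℝ) := by
  classical
  ext i
  simp [EuclideanSpace.single_apply, Pi.single_apply]

/-- a continuous linear map on Euclidean space from a matrix -/
noncomputable def matCLM (M : Matrix (Fin p) (Fin p) ℝ) : EuclideanSpace ℝ (Fin p) →L[ℝ] EuclideanSpace ℝ (Fin p) :=
  LinearMap.toContinuousLinearMap
    { toFun := fun x => (WithLp.toLp 2 (M.mulVec x) : EuclideanSpace ℝ (Fin p))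
      map_add' := by
        intro x y; ext i
        simp [Matrix.mulVec, dotProduct, mul_add, Finset.sum_add_distrib]
      map_smul' := by
        intro c x; ext i
        simp [Matrix.mulVec, dotProduct, Finset.mul_sum, mul_left_comm] }

@[simp] lemma matCLM_apply (M : Matrix (Fin p) (Fin p) ℝ) (x : E) :
    matCLM M x = (WithLp.toLp 2 (M.mulVec x) : EuclideanSpace ℝ (Fin p)) := rfl

lemma matCLM_matCLM (M N : Matrix (Fin p) (Fin p) ℝ) (x : E) :
    matCLM M (matCLM N x) = matCLM (M * N) x := by
  ext i
  simp [Matrix.mulVec_mulVec]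

lemma matCLM_one (x : E) : matCLM (1 : Matrix (Fin p) (Fin p) ℝ) x = x := by
  ext i
  simp [Matrix.one_mulVec]

lemma matCLM_single (M : Matrix (Fin p) (Fin p) ℝ) (j : Fin p) (i : Fin p) :
    matCLM M (EuclideanSpace.single j (1:ℝ)) i = M i j := by
  rw [matCLM_apply]
  simp [Matrix.mulVec, dotProduct, EuclideanSpace.single_apply]

/-- entrywise bound gives pointwise operator bound -/
lemma clm_pointwise_bound (T : EuclideanSpace ℝ (Fin p) →L[ℝ] EuclideanSpace ℝ (Fin p)) (δ : ℝ)
    (h : ∀ i j, |T (EuclideanSpace.single j (1:ℝ)) i| ≤ δ) (x : E) :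
    ‖T x‖ ≤ ((p:ℝ)^2 * δ) * ‖x‖ := by
  rcases Nat.eq_zero_or_pos p with hp | hp
  · subst hp
    have hx : ‖x‖ = 0 := by
      rw [EuclideanSpace.norm_eq]; simp
    have hTx : ‖T x‖ = 0 := by
      rw [EuclideanSpace.norm_eq]; simp
    rw [hTx, hx, mul_zero]
  · have hδ : 0 ≤ δ := le_trans (abs_nonneg (T (EuclideanSpace.single ⟨0, hp⟩ (1:ℝ)) ⟨0, hp⟩)) (h _ _)
    have hxj : ∀ j : Fin p, |x j| ≤ ‖x‖ := fun j => coord_abs_le_norm x j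
    have hTsingle : ∀ j : Fin p, ‖T (EuclideanSpace.single j (1:ℝ))‖ ≤ (p:ℝ) * δ := by
      intro j
      calc ‖T (EuclideanSpace.single j (1:ℝ))‖ ≤ ∑ i, |T (EuclideanSpace.single j (1:ℝ)) i| :=
            norm_le_sum_abs _
        _ ≤ ∑ _i : Fin p, δ := Finset.sum_le_sum fun i _ => h i j
        _ = (p:ℝ) * δ := by simp [mul_comm]
    calc ‖T x‖ = ‖T (∑ j, x j • EuclideanSpace.single j (1:ℝ))‖ := by rw [← eq_sum_single]
      _ = ‖∑ j, x j • T (EuclideanSpace.single j (1:ℝ))‖ := by rw [map_sum]; simp_rw [T.map_smul]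
      _ ≤ ∑ j, ‖x j • T (EuclideanSpace.single j (1:ℝ))‖ := norm_sum_le _ _
      _ = ∑ j, |x j| * ‖T (EuclideanSpace.single j (1:ℝ))‖ := by
          simp_rw [norm_smul, Real.norm_eq_abs]
      _ ≤ ∑ _j : Fin p, ‖x‖ * ((p:ℝ) * δ) := by
          apply Finset.sum_le_sum
          intro j _
          exact mul_le_mul (hxj j) (hTsingle j) (norm_nonneg _) (norm_nonneg _)
      _ = (p:ℝ) * (‖x‖ * ((p:ℝ) * δ)) := by simp [mul_comm]
      _ = ((p:ℝ)^2 * δ) * ‖x‖ := by ring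


/-- The deterministic sandwich estimate. -/
lemma sandwich (u : E → E) (hu : ContDiff ℝ 2 u)
    (θstar θh : E) (B : Set E) (κ' r δJ : ℝ)
    (hκ' : 0 ≤ κ') (hδJ : 0 ≤ δJ)
    (hball : Metric.closedBall θstar r ⊆ B)
    (hhess : ∀ θ ∈ B, ‖fderiv ℝ (fderiv ℝ u) θ‖ ≤ κ')
    (hroot : u θh = 0)
    (hcons : ‖θh - θstar‖ ≤ r)
    (A : Matrix (Fin p) (Fin p) ℝ) (hA : IsUnit A.det)
    (hjac : ∀ i j, |fderiv ℝ u θstar (EuclideanSpace.single j (1:ℝ)) i - A i j| ≤ δJ)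
    (s : ℝ) (hs : 0 ≤ s) (M : ℝ)
    (hX : ‖s • u θstar‖ ≤ M)
    (c' η : ℝ) (hc : ‖matCLM (A⁻¹)‖ ≤ c')
    (hη : κ' * r + (p:ℝ)^2 * δJ ≤ η) (hsmall : c' * η ≤ 1/2) :
    ‖s • (θh - θstar) + matCLM (A⁻¹) (s • u θstar)‖ ≤ 2 * c'^2 * η * M := by
  have hr : 0 ≤ r := le_trans (norm_nonneg _) hcons
  have hc0 : 0 ≤ c' := le_trans (norm_nonneg _) hc
  have hη0 : 0 ≤ η := le_trans (by positivity) hη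
  have hM0 : 0 ≤ M := le_trans (norm_nonneg _) hX
  set D := fderiv ℝ u θstar with hD
  have hud : Differentiable ℝ u := hu.differentiable (by norm_num)
  have hfd : ContDiff ℝ 1 (fderiv ℝ u) := hu.fderiv_right (by norm_num)
  have hfdd : Differentiable ℝ (fderiv ℝ u) := hfd.differentiable (by norm_num)
  have hconv : Convex ℝ (Metric.closedBall θstar r) := convex_closedBall _ _
  have hθsmem : θstar ∈ Metric.closedBall θstar r := Metric.mem_closedBall_self hr
  have hθhmem : θh ∈ Metric.closedBall θstar r := by
    rw [Metric.mem_closedBall, dist_eq_norm]; exact hcons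
  -- step 1: first derivative Lipschitz-type bound on the ball
  have step1 : ∀ θ ∈ Metric.closedBall θstar r, ‖fderiv ℝ u θ - D‖ ≤ κ' * r := by
    intro θ hθ
    have h1 : ‖fderiv ℝ u θ - fderiv ℝ u θstar‖ ≤ κ' * ‖θ - θstar‖ := by
      apply Convex.norm_image_sub_le_of_norm_hasFDerivWithin_le
        (f := fderiv ℝ u) (f' := fun θ => fderiv ℝ (fderiv ℝ u) θ)
        (fun z hz => (hfdd z).hasFDerivAt.hasFDerivWithinAt)
        (fun z hz => hhess z (hball hz)) hconv hθsmem hθ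
    have h2 : ‖θ - θstar‖ ≤ r := by rwa [Metric.mem_closedBall, dist_eq_norm] at hθ
    calc ‖fderiv ℝ u θ - D‖ ≤ κ' * ‖θ - θstar‖ := h1
      _ ≤ κ' * r := mul_le_mul_of_nonneg_left h2 hκ'
  -- step 2/3: Taylor-type bound
  have step3 : ‖u θstar + (D θh - D θstar)‖ ≤ (κ' * r) * ‖θh - θstar‖ := by
    set g : E → E := fun θ => u θ - (D θ - D θstar) with hg
    have hgd : ∀ θ ∈ Metric.closedBall θstar r,
        HasFDerivWithinAt g (fderiv ℝ u θ - D) (Metric.closedBall θstar r) θ := by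
      intro θ hθ
      exact ((hud θ).hasFDerivAt.sub ((D.hasFDerivAt).sub_const (D θstar))).hasFDerivWithinAt
    have h3 := Convex.norm_image_sub_le_of_norm_hasFDerivWithin_le hgd
      (fun θ hθ => step1 θ hθ) hconv hθhmem hθsmem
    have h4 : g θstar - g θh = u θstar + (D θh - D θstar) := by
      simp only [hg, hroot]
      abel
    calc ‖u θstar + (D θh - D θstar)‖ = ‖g θstar - g θh‖ := by rw [h4]
      _ ≤ (κ' * r) * ‖θstar - θh‖ := h3
      _ = (κ' * r) * ‖θh - θstar‖ := by rw [norm_sub_rev]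
  set Y : E := s • (θh - θstar) with hY
  set X : E := s • u θstar with hX'
  have hYnorm : ‖Y‖ = s * ‖θh - θstar‖ := by
    rw [hY, norm_smul, Real.norm_eq_abs, abs_of_nonneg hs]
  -- step 4
  have step4 : ‖X + D Y‖ ≤ (κ' * r) * ‖Y‖ := by
    have h5 : D Y = s • (D θh - D θstar) := by
      rw [hY, D.map_smul, D.map_sub]
    have h6 : X + D Y = s • (u θstar + (D θh - D θstar)) := by
      rw [hX', h5, smul_add]
    rw [h6, norm_smul, Real.norm_eq_abs, abs_of_nonneg hs, hYnorm]
    calc s * ‖u θstar + (D θh - D θstar)‖ ≤ s * ((κ' * r) * ‖θh - θstar‖) := by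
          apply mul_le_mul_of_nonneg_left step3 hs
      _ = κ' * r * (s * ‖θh - θstar‖) := by ring
  -- step 5
  have step5 : ‖(D - matCLM A) Y‖ ≤ ((p:ℝ)^2 * δJ) * ‖Y‖ := by
    apply clm_pointwise_bound
    intro i j
    have : (D - matCLM A) (EuclideanSpace.single j (1:ℝ)) i
        = D (EuclideanSpace.single j (1:ℝ)) i - A i j := by
      rw [ContinuousLinearMap.sub_apply]
      rw [show ((D (EuclideanSpace.single j (1:ℝ)) - matCLM A (EuclideanSpace.single j (1:ℝ))) i)
          = D (EuclideanSpace.single j (1:ℝ)) i - matCLM A (EuclideanSpace.single j (1:ℝ)) i from rfl]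
      rw [matCLM_single]
    rw [this]
    exact hjac i j
  -- step 6
  have step6 : ‖X + matCLM A Y‖ ≤ η * ‖Y‖ := by
    have h7 : X + matCLM A Y = (X + D Y) - ((D - matCLM A) Y) := by
      rw [ContinuousLinearMap.sub_apply]
      abel
    calc ‖X + matCLM A Y‖ ≤ ‖X + D Y‖ + ‖(D - matCLM A) Y‖ := by
          rw [h7]; exact norm_sub_le _ _
      _ ≤ (κ' * r) * ‖Y‖ + ((p:ℝ)^2 * δJ) * ‖Y‖ := add_le_add step4 step5
      _ = (κ' * r + (p:ℝ)^2 * δJ) * ‖Y‖ := by ring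
      _ ≤ η * ‖Y‖ := mul_le_mul_of_nonneg_right hη (norm_nonneg Y)
  -- step 7: Y is bounded
  have hYid : matCLM (A⁻¹) (matCLM A Y) = Y := by
    rw [matCLM_matCLM, Matrix.nonsing_inv_mul A hA, matCLM_one]
  have step7 : ‖Y‖ ≤ 2 * c' * M := by
    have h8 : ‖Y‖ ≤ c' * ‖matCLM A Y‖ := by
      calc ‖Y‖ = ‖matCLM (A⁻¹) (matCLM A Y)‖ := by rw [hYid]
        _ ≤ ‖matCLM (A⁻¹)‖ * ‖matCLM A Y‖ := ContinuousLinearMap.le_opNorm _ _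
        _ ≤ c' * ‖matCLM A Y‖ := mul_le_mul_of_nonneg_right hc (norm_nonneg _)
    have h9 : ‖matCLM A Y‖ ≤ ‖X + matCLM A Y‖ + ‖X‖ := by
      calc ‖matCLM A Y‖ = ‖(X + matCLM A Y) - X‖ := by rw [add_sub_cancel_left]
        _ ≤ ‖X + matCLM A Y‖ + ‖X‖ := norm_sub_le _ _
    have h10 : ‖Y‖ ≤ c' * η * ‖Y‖ + c' * M := by
      calc ‖Y‖ ≤ c' * ‖matCLM A Y‖ := h8
        _ ≤ c' * (‖X + matCLM A Y‖ + ‖X‖) := mul_le_mul_of_nonneg_left h9 hc0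
        _ ≤ c' * (η * ‖Y‖ + M) := mul_le_mul_of_nonneg_left (add_le_add step6 hX) hc0
        _ = c' * η * ‖Y‖ + c' * M := by ring
    nlinarith [norm_nonneg Y]
  -- step 8
  have h11 : Y + matCLM (A⁻¹) X = matCLM (A⁻¹) (X + matCLM A Y) := by
    rw [map_add, hYid]; abel
  calc ‖Y + matCLM (A⁻¹) X‖ = ‖matCLM (A⁻¹) (X + matCLM A Y)‖ := by rw [h11]
    _ ≤ ‖matCLM (A⁻¹)‖ * ‖X + matCLM A Y‖ := ContinuousLinearMap.le_opNorm _ _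
    _ ≤ c' * (η * ‖Y‖) := mul_le_mul hc step6 (norm_nonneg _) hc0
    _ ≤ c' * (η * (2 * c' * M)) :=
        mul_le_mul_of_nonneg_left (mul_le_mul_of_nonneg_left step7 hη0) hc0
    _ = 2 * c'^2 * η * M := by ring


/-- tail cutoff function -/
noncomputable def tailBCF (M : ℝ) : BoundedContinuousFunction (EuclideanSpace ℝ (Fin p)) ℝ :=
  BoundedContinuousFunction.mkOfBound
    ⟨fun x => min 1 (max (‖x‖ - M) 0),
      continuous_const.min ((continuous_norm.sub continuous_const).max continuous_const)⟩ 1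
    (by
      intro x y
      have h1 : ∀ z : EuclideanSpace ℝ (Fin p), 0 ≤ min 1 (max (‖z‖ - M) 0) :=
        fun z => le_min zero_le_one (le_max_right _ _)
      have h2 : ∀ z : EuclideanSpace ℝ (Fin p), min 1 (max (‖z‖ - M) 0) ≤ 1 :=
        fun z => min_le_left _ _
      rw [Real.dist_eq, abs_sub_le_iff]
      constructor <;> [skip; skip] <;> simp only [ContinuousMap.coe_mk] <;>
        [linarith [h1 y, h2 x]; linarith [h1 x, h2 y]])

lemma tailBCF_nonneg (M : ℝ) (x : E) : 0 ≤ tailBCF (p := p) M x :=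
  le_min zero_le_one (le_max_right _ _)

lemma tailBCF_le_one (M : ℝ) (x : E) : tailBCF (p := p) M x ≤ 1 := min_le_left _ _

lemma tailBCF_apply (M : ℝ) (x : E) :
    tailBCF (p := p) M x = min 1 (max (‖x‖ - M) 0) := rfl

lemma tailBCF_eq_one (M : ℝ) (x : E) (h : M + 1 < ‖x‖) : tailBCF (p := p) M x = 1 := by
  have h1 : (1:ℝ) ≤ max (‖x‖ - M) 0 := le_max_of_le_left (by linarith)
  rw [tailBCF_apply]
  exact min_eq_left h1

lemma tailBCF_eq_zero (M : ℝ) (x : E) (h : ‖x‖ < M) : tailBCF (p := p) M x = 0 := by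
  rw [tailBCF_apply, max_eq_right (by linarith), min_eq_right zero_le_one]

/-- From convergence in distribution: eventual integrability plus convergence of integrals. -/
lemma evInt {Ω : Type*} [MeasurableSpace Ω] (μ : Measure Ω) [IsProbabilityMeasure μ]
    (X : ℕ → Ω → EuclideanSpace ℝ (Fin p)) (γ : Measure (EuclideanSpace ℝ (Fin p)))
    [IsProbabilityMeasure γ] (h : TendstoInDistribution X μ γ)
    (f : BoundedContinuousFunction (EuclideanSpace ℝ (Fin p)) ℝ) :
    (∀ᶠ n in atTop, Integrable (fun ω => f (X n ω)) μ) ∧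
      Tendsto (fun n => ∫ ω, f (X n ω) ∂μ) atTop (𝓝 (∫ x, f x ∂γ)) := by
  set c : ℝ := |∫ x, f x ∂γ| + 1 with hc
  set g : BoundedContinuousFunction (EuclideanSpace ℝ (Fin p)) ℝ :=
    f + BoundedContinuousFunction.const _ c with hgdef
  have hgapp : ∀ x, g x = f x + c := fun x => rfl
  have hgint : ∫ x, g x ∂γ = (∫ x, f x ∂γ) + c := by
    simp only [hgapp]
    rw [integral_add (f.integrable γ) (integrable_const c), integral_const]
    simp
  have habs : 1 ≤ |∫ x, g x ∂γ| := by
    rw [hgint, hc]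
    rcases abs_cases (∫ x, f x ∂γ) with ⟨h1, h2⟩ | ⟨h1, h2⟩ <;>
      [rw [abs_of_nonneg (by linarith)]; rw [abs_of_nonneg (by linarith)]] <;> linarith
  have hg := h g
  have hev : ∀ᶠ n in atTop, (1:ℝ)/2 ≤ |∫ ω, g (X n ω) ∂μ| := by
    have : ∀ᶠ n in atTop, |∫ ω, g (X n ω) ∂μ - ∫ x, g x ∂γ| < 1/2 := by
      have := Metric.tendsto_atTop.mp hg (1/2) (by norm_num)
      obtain ⟨N, hN⟩ := this
      filter_upwards [eventually_ge_atTop N] with n hn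
      have := hN n hn
      rwa [Real.dist_eq] at this
    filter_upwards [this] with n hn
    have := abs_sub_abs_le_abs_sub (∫ x, g x ∂γ) (∫ ω, g (X n ω) ∂μ)
    rw [abs_sub_comm] at hn
    linarith
  have hint : ∀ᶠ n in atTop, Integrable (fun ω => f (X n ω)) μ := by
    filter_upwards [hev] with n hn
    by_contra hni
    have hgi : ¬ Integrable (fun ω => g (X n ω)) μ := by
      intro hgi
      apply hni
      have : (fun ω => f (X n ω)) = fun ω => g (X n ω) - c := by
        funext ω; rw [hgapp]; ring
      rw [this]
      exact hgi.sub (integrable_const c)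
    rw [show (∫ ω, g (X n ω) ∂μ) = 0 from integral_undef hgi] at hn
    norm_num at hn
  refine ⟨hint, ?_⟩
  have heq : ∀ᶠ n in atTop, ∫ ω, f (X n ω) ∂μ = (∫ ω, g (X n ω) ∂μ) - c := by
    filter_upwards [hint] with n hn
    have : (∫ ω, g (X n ω) ∂μ) = ∫ ω, (f (X n ω) + c) ∂μ := by simp only [hgapp]
    rw [this, integral_add hn (integrable_const c), integral_const]
    simp
  have : Tendsto (fun n => (∫ ω, g (X n ω) ∂μ) - c) atTop (𝓝 ((∫ x, g x ∂γ) - c)) :=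
    hg.sub_const c
  rw [hgint] at this
  simp only [add_sub_cancel_right] at this
  exact Tendsto.congr' (heq.mono fun n hn => hn.symm) this


lemma measurable_coord (i : Fin p) : Measurable fun x : E => x i :=
  (EuclideanSpace.proj (𝕜 := ℝ) i).continuous.measurable

lemma measurable_linfun (v : Fin p → ℝ) : Measurable fun x : E => ∑ i, v i * x i :=
  Finset.measurable_sum _ fun i _ => (measurable_coord i).const_mul (v i)

lemma gauss_part (K A : Matrix (Fin p) (Fin p) ℝ)
    (γK : Measure (EuclideanSpace ℝ (Fin p))) (hA : IsUnit A.det)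
    (hγK : IsCenteredGaussianCov γK K) :
    IsCenteredGaussianCov (γK.map (fun x => (-(matCLM A⁻¹)) x)) (A⁻¹ * K * (A⁻¹)ᵀ) := by
  intro v
  have hLmeas : Measurable fun x : E => (-(matCLM (p := p) A⁻¹)) x :=
    (-(matCLM (p := p) A⁻¹)).continuous.measurable
  rw [Measure.map_map (measurable_linfun v) hLmeas]
  set w : Fin p → ℝ := -(v ᵥ* A⁻¹) with hw
  have hfun : ((fun x : E => ∑ i, v i * x i) ∘ fun x : E => (-(matCLM (p := p) A⁻¹)) x)
      = fun x : E => ∑ i, w i * x i := by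
    funext x
    simp only [Function.comp_apply, ContinuousLinearMap.neg_apply, matCLM_apply]
    have hcoord : ∀ i, ((-(WithLp.toLp 2 (A⁻¹.mulVec x)) : EuclideanSpace ℝ (Fin p)) i) = -(∑ j, A⁻¹ i j * x j) := by
      intro i
      simp [Matrix.mulVec, dotProduct]
    calc ∑ i, v i * ((-(WithLp.toLp 2 (A⁻¹.mulVec x)) : EuclideanSpace ℝ (Fin p)) i)
        = ∑ i, v i * (-(∑ j, A⁻¹ i j * x j)) := by simp_rw [hcoord]
      _ = ∑ i, ∑ j, -(v i * (A⁻¹ i j * x j)) := by simp [Finset.mul_sum]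
      _ = ∑ j, ∑ i, -(v i * (A⁻¹ i j * x j)) := Finset.sum_comm
      _ = ∑ j, w j * x j := by
          apply Finset.sum_congr rfl
          intro j _
          rw [hw]
          simp [Matrix.vecMul, dotProduct, Finset.sum_mul, neg_mul, mul_assoc]
  rw [hfun, hγK w]
  congr 1
  rw [hw, neg_dotProduct, Matrix.mulVec_neg, dotProduct_neg, neg_neg,
    mul_assoc, ← Matrix.mulVec_mulVec, ← Matrix.mulVec_mulVec, Matrix.mulVec_transpose]
  simp [dotProduct_mulVec]


lemma half_trick (a t : ℝ) (ha : 0 ≤ a) (ht : 0 ≤ t) : a * (t / (2 * (a + 1))) ≤ t / 2 := by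
  have h1 : a * (t / (2 * (a + 1))) = a * t / (2 * (a + 1)) := by ring
  rw [h1, div_le_div_iff₀ (by positivity) (by norm_num)]
  nlinarith [mul_nonneg ha ht]

end DMCLE

set_option maxHeartbeats 2000000 in
/-- Proposition 2 (asymptotic normality): if `θ̂_n` solves the estimating equation
`u_n(·, θ̂_n) = 0`, is consistent for `θ*`, `√n u_n(·, θ*) →d N_p(0, K)`, the Jacobian
`∇_θ u_n(·, θ*)` converges in probability to an invertible matrix `A`, and the second
derivatives are uniformly bounded near `θ*` with probability tending to one, then
`√n (θ̂_n − θ*) →d N_p(0, A⁻¹ K (A⁻¹)ᵀ)`. -/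
theorem dmcle_asymptotic_normality {Ω : Type*} [MeasurableSpace Ω] (μ : Measure Ω)
    [IsProbabilityMeasure μ]
    (p : ℕ) (Θ : Set (EuclideanSpace ℝ (Fin p))) (hΘ : IsOpen Θ)
    (θstar : EuclideanSpace ℝ (Fin p)) (hθstar : θstar ∈ Θ)
    (u : ℕ → Ω → EuclideanSpace ℝ (Fin p) → EuclideanSpace ℝ (Fin p))
    (hsmooth : ∀ n ω, ContDiff ℝ 2 (u n ω))
    (θhat : ℕ → Ω → EuclideanSpace ℝ (Fin p))
    (hmeas : ∀ n, Measurable (θhat n))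
    (hroot : ∀ n ω, u n ω (θhat n ω) = 0)
    -- (i) consistency
    (hconsist : ∀ ε > 0,
      Tendsto (fun n => μ {ω | ε < ‖θhat n ω - θstar‖}) atTop (𝓝 0))
    -- (ii) CLT for the score at θ*
    (K : Matrix (Fin p) (Fin p) ℝ) (hK : K.PosSemidef)
    (γK : Measure (EuclideanSpace ℝ (Fin p))) (hγKprob : IsProbabilityMeasure γK)
    (hγK : IsCenteredGaussianCov γK K)
    (hCLT : TendstoInDistribution
      (fun n ω => (Real.sqrt n) • u n ω θstar) μ γK)
    -- (iii) convergence in probability of the Jacobian to an invertible matrix A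
    (A : Matrix (Fin p) (Fin p) ℝ) (hA : IsUnit A.det)
    (hJac : ∀ ε > 0, ∀ i j : Fin p,
      Tendsto (fun n => μ {ω |
          ε < |fderiv ℝ (u n ω) θstar (EuclideanSpace.single j 1) i - A i j|})
        atTop (𝓝 0))
    -- (iv) second derivatives uniformly bounded near θ* w.p. → 1
    (B : Set (EuclideanSpace ℝ (Fin p))) (hB : B ∈ 𝓝 θstar) (κ : ℝ)
    (hHess : Tendsto
      (fun n => μ {ω | ∀ θ ∈ B, ‖fderiv ℝ (fderiv ℝ (u n ω)) θ‖ ≤ κ})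
      atTop (𝓝 1)) :
    ∃ γ : Measure (EuclideanSpace ℝ (Fin p)), IsProbabilityMeasure γ ∧
      IsCenteredGaussianCov γ (A⁻¹ * K * (A⁻¹)ᵀ) ∧
      TendstoInDistribution
        (fun n ω => (Real.sqrt n) • (θhat n ω - θstar)) μ γ := by
  classical
  haveI := hγKprob
  set Ainv : EuclideanSpace ℝ (Fin p) →L[ℝ] EuclideanSpace ℝ (Fin p) :=
    DMCLE.matCLM A⁻¹ with hAinvdef
  have hLmeas : Measurable fun x : EuclideanSpace ℝ (Fin p) => (-Ainv) x :=
    (-Ainv).continuous.measurable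
  refine ⟨γK.map (fun x => (-Ainv) x), Measure.isProbabilityMeasure_map hLmeas.aemeasurable,
    DMCLE.gauss_part K A γK hA hγK, ?_⟩
  intro f
  show Tendsto (fun n : ℕ => ∫ ω, f (Real.sqrt n • (θhat n ω - θstar)) ∂μ) atTop
    (𝓝 (∫ x, f x ∂(γK.map (fun x => (-Ainv) x))))
  have hlim : ∫ x, f x ∂(γK.map (fun x => (-Ainv) x)) = ∫ x, f ((-Ainv) x) ∂γK :=
    integral_map hLmeas.aemeasurable f.continuous.aestronglyMeasurable
  set g : BoundedContinuousFunction (EuclideanSpace ℝ (Fin p)) ℝ :=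
    f.compContinuous ⟨fun x => (-Ainv) x, (-Ainv).continuous⟩ with hgdef
  have hgapp : ∀ x, g x = f ((-Ainv) x) := fun x => rfl
  obtain ⟨hgIntEv, hgTendRaw⟩ :=
    DMCLE.evInt μ (fun n ω => (Real.sqrt n) • u n ω θstar) γK hCLT g
  have hgTend : Tendsto (fun n : ℕ => ∫ ω, g (Real.sqrt n • u n ω θstar) ∂μ) atTop
      (𝓝 (∫ x, g x ∂γK)) := hgTendRaw
  have hfY_meas : ∀ n : ℕ, Measurable fun ω => (Real.sqrt n) • (θhat n ω - θstar) :=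
    fun n => ((hmeas n).sub_const θstar).const_smul (Real.sqrt n)
  have hfY_int : ∀ n : ℕ, Integrable (fun ω => f ((Real.sqrt n) • (θhat n ω - θstar))) μ := by
    intro n
    refine (integrable_const ‖f‖).mono'
      (f.continuous.measurable.comp (hfY_meas n)).aestronglyMeasurable ?_
    exact ae_of_all _ fun ω => f.norm_coe_le_norm _
  haveI : IsProbabilityMeasure γK := hγKprob
  have hdiff : Tendsto (fun n : ℕ => (∫ ω, f ((Real.sqrt n) • (θhat n ω - θstar)) ∂μ)
      - ∫ ω, g ((Real.sqrt n) • u n ω θstar) ∂μ) atTop (𝓝 0) := by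
    rw [NormedAddCommGroup.tendsto_nhds_zero]
    intro ε hε
    -- constants
    set F : ℝ := ‖f‖ + 1 with hF
    have hFpos : 0 < F := by positivity
    have hfleF : ‖f‖ ≤ F := by linarith
    set ε₁ : ℝ := ε / 4 with hε₁
    have hε₁pos : 0 < ε₁ := by positivity
    set εM : ℝ := ε / (16 * F) with hεM
    have hεMpos : 0 < εM := by positivity
    set εs : ℝ := ε / (16 * F * ((p:ℝ)^2 + 3)) with hεs
    have hεspos : 0 < εs := by positivity
    -- tail level
    obtain ⟨Mt, hMt0, hMtail⟩ : ∃ Mt : ℝ, 0 ≤ Mt ∧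
        (γK {x : EuclideanSpace ℝ (Fin p) | Mt ≤ ‖x‖}).toReal ≤ εM := by
      have hmeasS : ∀ m : ℕ, MeasurableSet {x : EuclideanSpace ℝ (Fin p) | (m:ℝ) ≤ ‖x‖} :=
        fun m => measurableSet_le measurable_const measurable_norm
      have hanti : Antitone fun m : ℕ => {x : EuclideanSpace ℝ (Fin p) | (m:ℝ) ≤ ‖x‖} := by
        intro a b hab x hx
        exact le_trans (show (a:ℝ) ≤ (b:ℝ) from Nat.cast_le.mpr hab) hx
      have htend := MeasureTheory.tendsto_measure_iInter_atTop
        (μ := γK) (fun m => (hmeasS m).nullMeasurableSet) hanti ⟨0, measure_ne_top _ _⟩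
      have hInter : ⋂ m : ℕ, {x : EuclideanSpace ℝ (Fin p) | (m:ℝ) ≤ ‖x‖} = ∅ := by
        ext x
        simp only [Set.mem_iInter, Set.mem_setOf_eq, Set.mem_empty_iff_false, iff_false,
          not_forall, not_le]
        obtain ⟨m, hm⟩ := exists_nat_gt ‖x‖
        exact ⟨m, hm⟩
      rw [hInter, measure_empty] at htend
      obtain ⟨m, hm⟩ := (htend.eventually_lt_const (ENNReal.ofReal_pos.mpr hεMpos)).exists
      refine ⟨(m:ℝ), Nat.cast_nonneg m, ?_⟩
      have h1 : (γK {x : EuclideanSpace ℝ (Fin p) | (m:ℝ) ≤ ‖x‖}).toReal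
          ≤ (ENNReal.ofReal εM).toReal := ENNReal.toReal_mono ENNReal.ofReal_ne_top hm.le
      rwa [ENNReal.toReal_ofReal hεMpos.le] at h1
    set M : ℝ := Mt + 1 with hM
    have hMpos : 0 < M := by linarith
    have hM1 : (1:ℝ) ≤ M := by linarith
    set tail := DMCLE.tailBCF (p := p) Mt with htaildef
    have htailint : ∫ x, tail x ∂γK ≤ εM := by
      have hSmeas : MeasurableSet {x : EuclideanSpace ℝ (Fin p) | Mt ≤ ‖x‖} :=
        measurableSet_le measurable_const measurable_norm
      have hpt : ∀ x, tail x ≤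
          {x : EuclideanSpace ℝ (Fin p) | Mt ≤ ‖x‖}.indicator (fun _ => (1:ℝ)) x := by
        intro x
        by_cases hx : Mt ≤ ‖x‖
        · have hx' : x ∈ {y : EuclideanSpace ℝ (Fin p) | Mt ≤ ‖y‖} := hx
          rw [Set.indicator_of_mem hx']
          exact DMCLE.tailBCF_le_one _ _
        · have hx' : x ∉ {y : EuclideanSpace ℝ (Fin p) | Mt ≤ ‖y‖} := hx
          rw [Set.indicator_of_notMem hx', htaildef,
            DMCLE.tailBCF_eq_zero Mt x (not_le.mp hx)]
      calc ∫ x, tail x ∂γK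
          ≤ ∫ x, {x : EuclideanSpace ℝ (Fin p) | Mt ≤ ‖x‖}.indicator (fun _ => (1:ℝ)) x ∂γK :=
            integral_mono (tail.integrable γK) ((integrable_const (1:ℝ)).indicator hSmeas) hpt
        _ = (γK {x : EuclideanSpace ℝ (Fin p) | Mt ≤ ‖x‖}).toReal • (1:ℝ) :=
            integral_indicator_const _ hSmeas
        _ ≤ εM := by rw [smul_eq_mul, mul_one]; exact hMtail
    obtain ⟨hTailIntEv, hTailTendRaw⟩ :=
      DMCLE.evInt μ (fun n ω => (Real.sqrt n) • u n ω θstar) γK hCLT tail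
    have hTailEv := hTailTendRaw.eventually_lt_const
      (show ∫ x, tail x ∂γK < εM + εs by linarith)
    -- operator norm constant
    set c' : ℝ := ‖Ainv‖ + 1 with hc'def
    have hc'pos : 0 < c' := by positivity
    have hc : ‖Ainv‖ ≤ c' := by linarith
    -- uniform continuity on a compact ball
    have hKcp : IsCompact (Metric.closedBall (0 : EuclideanSpace ℝ (Fin p)) (c' * M + 1)) :=
      isCompact_closedBall _ _
    have hUC := hKcp.uniformContinuousOn_of_continuous f.continuous.continuousOn
    obtain ⟨δuc, hδucpos, hδuc⟩ := Metric.uniformContinuousOn_iff.mp hUC ε₁ hε₁pos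
    set δ' : ℝ := min (δuc / 2) 1 with hδ'def
    have hδ'pos : 0 < δ' := lt_min (by linarith) one_pos
    have hδ'le1 : δ' ≤ 1 := min_le_right _ _
    have hδ'lt : δ' < δuc := lt_of_le_of_lt (min_le_left _ _) (by linarith)
    set η₀ : ℝ := min (1 / (2 * c')) (δ' / (4 * c'^2 * M)) with hη₀def
    have hη₀pos : 0 < η₀ := by
      apply lt_min (by positivity)
      have h4 : 0 < 4 * c'^2 * M := by positivity
      positivity
    set κ' : ℝ := max κ 0 with hκ'def
    have hκ'0 : 0 ≤ κ' := le_max_right _ _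
    obtain ⟨ρ, hρpos, hρsub⟩ := Metric.mem_nhds_iff.mp hB
    set r : ℝ := min (ρ / 2) (η₀ / (2 * (κ' + 1))) with hrdef
    have hrpos : 0 < r := by
      apply lt_min (by linarith)
      positivity
    have hballB : Metric.closedBall θstar r ⊆ B := by
      intro z hz
      apply hρsub
      rw [Metric.mem_ball]
      rw [Metric.mem_closedBall] at hz
      calc dist z θstar ≤ r := hz
        _ ≤ ρ / 2 := min_le_left _ _
        _ < ρ := by linarith
    set δJ : ℝ := η₀ / (2 * ((p:ℝ)^2 + 1)) with hδJdef
    have hδJpos : 0 < δJ := by positivity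
    have hηcond : κ' * r + (p:ℝ)^2 * δJ ≤ η₀ := by
      have h1 : κ' * r ≤ κ' * (η₀ / (2 * (κ' + 1))) :=
        mul_le_mul_of_nonneg_left (min_le_right _ _) hκ'0
      have h2 : κ' * (η₀ / (2 * (κ' + 1))) ≤ η₀ / 2 :=
        DMCLE.half_trick κ' η₀ hκ'0 hη₀pos.le
      have h3 : (p:ℝ)^2 * δJ ≤ η₀ / 2 := by
        rw [hδJdef]
        exact DMCLE.half_trick ((p:ℝ)^2) η₀ (by positivity) hη₀pos.le
      linarith
    have hsmall : c' * η₀ ≤ 1 / 2 := by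
      have h1 : η₀ ≤ 1 / (2 * c') := min_le_left _ _
      have h2 : c' * η₀ ≤ c' * (1 / (2 * c')) := mul_le_mul_of_nonneg_left h1 hc'pos.le
      have h3 : c' * (1 / (2 * c')) = 1 / 2 := by
        rw [mul_one_div, div_eq_div_iff (by positivity) (by norm_num)]
        ring
      linarith
    have hδ'bound : 2 * c'^2 * η₀ * M ≤ δ' := by
      have h1 : η₀ ≤ δ' / (4 * c'^2 * M) := min_le_right _ _
      have h2 : (0:ℝ) < 2 * c'^2 * M := by positivity
      have h3 : (2 * c'^2 * M) * η₀ ≤ (2 * c'^2 * M) * (δ' / (4 * c'^2 * M)) :=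
        mul_le_mul_of_nonneg_left h1 h2.le
      have h4 : (2 * c'^2 * M) * (δ' / (4 * c'^2 * M)) = δ' / 2 := by
        field_simp [hc'pos.ne', hMpos.ne']
        ring
      calc 2 * c'^2 * η₀ * M = (2 * c'^2 * M) * η₀ := by ring
        _ ≤ (2 * c'^2 * M) * (δ' / (4 * c'^2 * M)) := h3
        _ = δ' / 2 := h4
        _ ≤ δ' := by linarith only [hδ'pos]
    -- the eventual events
    have EvC := (hconsist r hrpos).eventually_lt_const (ENNReal.ofReal_pos.mpr hεspos)
    have EvJ : ∀ᶠ n in atTop, ∀ i j : Fin p,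
        μ {ω | δJ < |fderiv ℝ (u n ω) θstar (EuclideanSpace.single j 1) i - A i j|}
          < ENNReal.ofReal εs := by
      rw [eventually_all]
      intro i
      rw [eventually_all]
      intro j
      exact (hJac δJ hδJpos i j).eventually_lt_const (ENNReal.ofReal_pos.mpr hεspos)
    have EvH : ∀ᶠ n in atTop,
        1 - εs < (μ {ω | ∀ θ ∈ B, ‖fderiv ℝ (fderiv ℝ (u n ω)) θ‖ ≤ κ}).toReal := by
      have h1 : Tendsto
          (fun n => (μ {ω | ∀ θ ∈ B, ‖fderiv ℝ (fderiv ℝ (u n ω)) θ‖ ≤ κ}).toReal)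
          atTop (𝓝 (1:ENNReal).toReal) :=
        (ENNReal.tendsto_toReal ENNReal.one_ne_top).comp hHess
      rw [ENNReal.toReal_one] at h1
      exact h1.eventually_const_lt (by linarith)
    filter_upwards [EvC, EvJ, EvH, hTailIntEv, hTailEv, hgIntEv] with n hCr hJ hH hT1r hT2r hGr
    have hC : μ {ω | r < ‖θhat n ω - θstar‖} < ENNReal.ofReal εs := hCr
    have hT1 : Integrable (fun ω => tail (Real.sqrt n • u n ω θstar)) μ := hT1r
    have hT2 : ∫ ω, tail (Real.sqrt n • u n ω θstar) ∂μ < εM + εs := hT2r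
    have hG : Integrable (fun ω => g (Real.sqrt n • u n ω θstar)) μ := hGr
    -- bad sets
    set Cn : Set Ω := {ω | r < ‖θhat n ω - θstar‖} with hCndef
    have hCnMeas : MeasurableSet Cn :=
      measurableSet_lt measurable_const ((hmeas n).sub_const θstar).norm
    set Jn : Set Ω := ⋃ i : Fin p, ⋃ j : Fin p,
      {ω | δJ < |fderiv ℝ (u n ω) θstar (EuclideanSpace.single j 1) i - A i j|} with hJndef
    set Jm : Set Ω := toMeasurable μ Jn with hJmdef
    have hJmMeas : MeasurableSet Jm := measurableSet_toMeasurable _ _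
    have hJmVal : (μ Jm).toReal ≤ (p:ℝ)^2 * εs := by
      have h1 : μ Jn ≤ ENNReal.ofReal ((p:ℝ)^2 * εs) := by
        calc μ Jn ≤ ∑' i : Fin p, μ (⋃ j : Fin p,
              {ω | δJ < |fderiv ℝ (u n ω) θstar (EuclideanSpace.single j 1) i - A i j|}) :=
              measure_iUnion_le _
          _ = ∑ i : Fin p, μ (⋃ j : Fin p,
              {ω | δJ < |fderiv ℝ (u n ω) θstar (EuclideanSpace.single j 1) i - A i j|}) :=
              tsum_fintype _
          _ ≤ ∑ i : Fin p, ∑ j : Fin p,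
              μ {ω | δJ < |fderiv ℝ (u n ω) θstar (EuclideanSpace.single j 1) i - A i j|} := by
              apply Finset.sum_le_sum
              intro i _
              exact le_trans (measure_iUnion_le _) (le_of_eq (tsum_fintype _))
          _ ≤ ∑ _i : Fin p, ∑ _j : Fin p, ENNReal.ofReal εs := by
              apply Finset.sum_le_sum
              intro i _
              apply Finset.sum_le_sum
              intro j _
              exact (hJ i j).le
          _ = (p : ENNReal) * ((p : ENNReal) * ENNReal.ofReal εs) := by
              simp [Finset.sum_const, Finset.card_univ, mul_assoc]
          _ = ENNReal.ofReal ((p:ℝ)^2 * εs) := by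
              rw [sq, mul_assoc, ENNReal.ofReal_mul (Nat.cast_nonneg p),
                ENNReal.ofReal_mul (Nat.cast_nonneg p), ENNReal.ofReal_natCast]
      calc (μ Jm).toReal = (μ Jn).toReal := by rw [hJmdef, measure_toMeasurable]
        _ ≤ (ENNReal.ofReal ((p:ℝ)^2 * εs)).toReal :=
            ENNReal.toReal_mono ENNReal.ofReal_ne_top h1
        _ = (p:ℝ)^2 * εs := ENNReal.toReal_ofReal (by positivity)
    set Xs : Set Ω := {ω | 1 ≤ tail (Real.sqrt n • u n ω θstar)} with hXsdef
    set Xm : Set Ω := toMeasurable μ Xs with hXmdef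
    have hXmMeas : MeasurableSet Xm := measurableSet_toMeasurable _ _
    have hXmVal : (μ Xm).toReal ≤ εM + εs := by
      have h1 := mul_meas_ge_le_integral_of_nonneg
        (ae_of_all μ fun ω => DMCLE.tailBCF_nonneg Mt (Real.sqrt n • u n ω θstar)) hT1 1
      rw [one_mul] at h1
      calc (μ Xm).toReal = (μ Xs).toReal := by rw [hXmdef, measure_toMeasurable]
        _ ≤ ∫ ω, tail (Real.sqrt n • u n ω θstar) ∂μ := h1
        _ ≤ εM + εs := hT2.le
    -- a.e. measurable version of g∘X
    have hGm := hG.aestronglyMeasurable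
    set G : Ω → ℝ := hGm.mk _ with hGdef
    have hGmeas : StronglyMeasurable G := hGm.stronglyMeasurable_mk
    have hGae : (fun ω => g (Real.sqrt n • u n ω θstar)) =ᵐ[μ] G := hGm.ae_eq_mk
    set N : Set Ω := {ω | ¬ g (Real.sqrt n • u n ω θstar) = G ω} with hNdef
    have hNnull : μ N = 0 := ae_iff.mp hGae
    set Nm : Set Ω := toMeasurable μ N with hNmdef
    have hNmMeas : MeasurableSet Nm := measurableSet_toMeasurable _ _
    have hNmVal : μ Nm = 0 := by rw [hNmdef, measure_toMeasurable, hNnull]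
    set V' : Set Ω := {ω | ε₁ < |f (Real.sqrt n • (θhat n ω - θstar)) - G ω|} with hV'def
    have hV'meas : MeasurableSet V' := measurableSet_lt measurable_const
      ((f.continuous.measurable.comp (hfY_meas n)).sub hGmeas.measurable).abs
    set W : Set Ω := V' \ (Cn ∪ Jm ∪ Xm ∪ Nm) with hWdef
    have hWmeas : MeasurableSet W :=
      hV'meas.diff (((hCnMeas.union hJmMeas).union hXmMeas).union hNmMeas)
    -- the deterministic estimate on the good event
    have hgood : ∀ ω, ω ∉ Cn → ω ∉ Jm → ω ∉ Xm →
        (∀ θ ∈ B, ‖fderiv ℝ (fderiv ℝ (u n ω)) θ‖ ≤ κ) →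
        |f (Real.sqrt n • (θhat n ω - θstar)) - g (Real.sqrt n • u n ω θstar)| ≤ ε₁ := by
      intro ω hc1 hj1 hx1 hhess
      have hcons : ‖θhat n ω - θstar‖ ≤ r := not_lt.mp fun hlt => hc1 hlt
      have hjac' : ∀ i j, |fderiv ℝ (u n ω) θstar (EuclideanSpace.single j 1) i - A i j| ≤ δJ := by
        intro i j
        by_contra hgt
        apply hj1
        apply subset_toMeasurable
        rw [hJndef]
        exact Set.mem_iUnion.mpr ⟨i, Set.mem_iUnion.mpr ⟨j, not_le.mp hgt⟩⟩
      have hXb : ‖Real.sqrt n • u n ω θstar‖ ≤ M := by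
        by_contra hgt
        apply hx1
        apply subset_toMeasurable
        rw [hXsdef]
        show (1:ℝ) ≤ tail (Real.sqrt n • u n ω θstar)
        rw [htaildef, DMCLE.tailBCF_eq_one Mt _ (by rw [hM] at hgt; exact not_le.mp hgt)]
      have hhess' : ∀ θ ∈ B, ‖fderiv ℝ (fderiv ℝ (u n ω)) θ‖ ≤ κ' :=
        fun θ hθ => le_trans (hhess θ hθ) (le_max_left _ _)
      have hsand := DMCLE.sandwich (u n ω) (hsmooth n ω) θstar (θhat n ω) B κ' r δJ
        hκ'0 hδJpos.le hballB hhess' (hroot n ω) hcons A hA hjac'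
        (Real.sqrt n) (Real.sqrt_nonneg _) M hXb c' η₀ hc hηcond hsmall
      have h1 : ‖Real.sqrt n • (θhat n ω - θstar) + Ainv (Real.sqrt n • u n ω θstar)‖ ≤ δ' :=
        le_trans hsand hδ'bound
      have hLX : ‖Ainv (Real.sqrt n • u n ω θstar)‖ ≤ c' * M :=
        le_trans (Ainv.le_opNorm _) (mul_le_mul hc hXb (norm_nonneg _) hc'pos.le)
      have hYb : ‖Real.sqrt n • (θhat n ω - θstar)‖ ≤ c' * M + 1 := by
        have h2 : ‖Real.sqrt n • (θhat n ω - θstar)‖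
            ≤ ‖Real.sqrt n • (θhat n ω - θstar) + Ainv (Real.sqrt n • u n ω θstar)‖
              + ‖Ainv (Real.sqrt n • u n ω θstar)‖ := by
          calc ‖Real.sqrt n • (θhat n ω - θstar)‖
              = ‖(Real.sqrt n • (θhat n ω - θstar) + Ainv (Real.sqrt n • u n ω θstar))
                - Ainv (Real.sqrt n • u n ω θstar)‖ := by rw [add_sub_cancel_right]
            _ ≤ _ := norm_sub_le _ _
        linarith
      have hLXb : ‖(-Ainv) (Real.sqrt n • u n ω θstar)‖ ≤ c' * M + 1 := by
        rw [ContinuousLinearMap.neg_apply, norm_neg]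
        linarith
      have hdist : dist (Real.sqrt n • (θhat n ω - θstar)) ((-Ainv) (Real.sqrt n • u n ω θstar))
          < δuc := by
        rw [dist_eq_norm, ContinuousLinearMap.neg_apply, sub_neg_eq_add]
        linarith
      have hucuse := hδuc (Real.sqrt n • (θhat n ω - θstar))
        (by rw [Metric.mem_closedBall, dist_zero_right]; exact hYb)
        ((-Ainv) (Real.sqrt n • u n ω θstar))
        (by rw [Metric.mem_closedBall, dist_zero_right]; exact hLXb) hdist
      rw [Real.dist_eq] at hucuse
      rw [hgapp]
      exact hucuse.le
    -- W is disjoint from the Hessian event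
    have hWE : ∀ ω ∈ W, ¬ (∀ θ ∈ B, ‖fderiv ℝ (fderiv ℝ (u n ω)) θ‖ ≤ κ) := by
      intro ω hω hhess
      obtain ⟨hV, hnot⟩ := hω
      simp only [Set.mem_union, not_or] at hnot
      obtain ⟨⟨⟨hc1, hj1⟩, hx1⟩, hn1⟩ := hnot
      have hgeq : g (Real.sqrt n • u n ω θstar) = G ω := by
        by_contra hne
        exact hn1 (subset_toMeasurable μ N hne)
      have h2 := hgood ω hc1 hj1 hx1 hhess
      have hV2 : ε₁ < |f (Real.sqrt n • (θhat n ω - θstar)) - G ω| := hV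
      rw [← hgeq] at hV2
      exact absurd h2 (not_le.mpr hV2)
    have hWVal : (μ W).toReal ≤ εs := by
      have hsub : {ω | ∀ θ ∈ B, ‖fderiv ℝ (fderiv ℝ (u n ω)) θ‖ ≤ κ} ⊆ Wᶜ :=
        fun ω hω hWω => hWE ω hWω hω
      have h1 : μ {ω | ∀ θ ∈ B, ‖fderiv ℝ (fderiv ℝ (u n ω)) θ‖ ≤ κ} ≤ μ Wᶜ :=
        measure_mono hsub
      have h2 : (μ Wᶜ).toReal = 1 - (μ W).toReal := by
        rw [prob_compl_eq_one_sub hWmeas,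
          ENNReal.toReal_sub_of_le prob_le_one ENNReal.one_ne_top, ENNReal.toReal_one]
      have h4 : (μ {ω | ∀ θ ∈ B, ‖fderiv ℝ (fderiv ℝ (u n ω)) θ‖ ≤ κ}).toReal
          ≤ (μ Wᶜ).toReal := ENNReal.toReal_mono (measure_ne_top μ _) h1
      rw [h2] at h4
      linarith
    -- the union of bad sets
    set U : Set Ω := Cn ∪ Jm ∪ Xm ∪ Nm ∪ W with hUdef
    have hUmeas : MeasurableSet U :=
      (((hCnMeas.union hJmMeas).union hXmMeas).union hNmMeas).union hWmeas
    have htR : ∀ s t : Set Ω, (μ (s ∪ t)).toReal ≤ (μ s).toReal + (μ t).toReal := by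
      intro s t
      have h1 := measure_union_le (μ := μ) s t
      have h2 : (μ (s ∪ t)).toReal ≤ (μ s + μ t).toReal :=
        ENNReal.toReal_mono (ENNReal.add_ne_top.mpr ⟨measure_ne_top μ s, measure_ne_top μ t⟩) h1
      rwa [ENNReal.toReal_add (measure_ne_top μ s) (measure_ne_top μ t)] at h2
    have hCVal : (μ Cn).toReal ≤ εs := by
      have h1 : (μ Cn).toReal ≤ (ENNReal.ofReal εs).toReal :=
        ENNReal.toReal_mono ENNReal.ofReal_ne_top hC.le
      rwa [ENNReal.toReal_ofReal hεspos.le] at h1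
    have hNVal : (μ Nm).toReal = 0 := by rw [hNmVal]; simp
    have hUVal : (μ U).toReal ≤ εM + ((p:ℝ)^2 + 3) * εs := by
      have h1 := htR (Cn ∪ Jm ∪ Xm ∪ Nm) W
      have h2 := htR (Cn ∪ Jm ∪ Xm) Nm
      have h3 := htR (Cn ∪ Jm) Xm
      have h4 := htR Cn Jm
      have h5 := htR Cn Jm
      rw [hUdef]
      linarith [hCVal, hJmVal, hXmVal, hWVal, hNVal]
    -- pointwise bound
    have hpoint : ∀ ω, |f (Real.sqrt n • (θhat n ω - θstar)) - g (Real.sqrt n • u n ω θstar)|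
        ≤ ε₁ + U.indicator (fun _ => 2 * F) ω := by
      intro ω
      by_cases hωU : ω ∈ U
      · rw [Set.indicator_of_mem hωU]
        have h1 : |f (Real.sqrt n • (θhat n ω - θstar))| ≤ ‖f‖ := by
          rw [← Real.norm_eq_abs]
          exact f.norm_coe_le_norm _
        have h2 : |g (Real.sqrt n • u n ω θstar)| ≤ ‖f‖ := by
          rw [hgapp, ← Real.norm_eq_abs]
          exact f.norm_coe_le_norm _
        have h3 : |f (Real.sqrt n • (θhat n ω - θstar)) - g (Real.sqrt n • u n ω θstar)|
            ≤ |f (Real.sqrt n • (θhat n ω - θstar))| + |g (Real.sqrt n • u n ω θstar)| := by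
          calc |f (Real.sqrt n • (θhat n ω - θstar)) - g (Real.sqrt n • u n ω θstar)|
              = |f (Real.sqrt n • (θhat n ω - θstar)) + -(g (Real.sqrt n • u n ω θstar))| := by
                rw [sub_eq_add_neg]
            _ ≤ |f (Real.sqrt n • (θhat n ω - θstar))| + |-(g (Real.sqrt n • u n ω θstar))| :=
                abs_add_le _ _
            _ = _ := by rw [abs_neg]
        linarith
      · rw [Set.indicator_of_notMem hωU, add_zero]
        by_contra hgt
        push_neg at hgt
        have hnotU : ω ∉ Cn ∧ ω ∉ Jm ∧ ω ∉ Xm ∧ ω ∉ Nm ∧ ω ∉ W := by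
          rw [hUdef] at hωU
          simp only [Set.mem_union, not_or] at hωU
          exact ⟨hωU.1.1.1.1, hωU.1.1.1.2, hωU.1.1.2, hωU.1.2, hωU.2⟩
        obtain ⟨hc1, hj1, hx1, hn1, hw1⟩ := hnotU
        have hgeq : g (Real.sqrt n • u n ω θstar) = G ω := by
          by_contra hne
          exact hn1 (subset_toMeasurable μ N hne)
        have hVmem : ω ∈ V' := by
          show ε₁ < |f (Real.sqrt n • (θhat n ω - θstar)) - G ω|
          rw [← hgeq]
          exact hgt
        apply hw1
        rw [hWdef]
        refine ⟨hVmem, ?_⟩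
        simp only [Set.mem_union, not_or]
        exact ⟨⟨⟨hc1, hj1⟩, hx1⟩, hn1⟩
    -- final computation
    have hint2 : Integrable (fun ω => ε₁ + U.indicator (fun _ => 2 * F) ω) μ :=
      (integrable_const ε₁).add ((integrable_const (2 * F)).indicator hUmeas)
    have habs1 : |∫ ω, (f (Real.sqrt n • (θhat n ω - θstar))
        - g (Real.sqrt n • u n ω θstar)) ∂μ|
        ≤ ∫ ω, |f (Real.sqrt n • (θhat n ω - θstar)) - g (Real.sqrt n • u n ω θstar)| ∂μ := by
      have h := norm_integral_le_integral_norm (μ := μ)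
        (f := fun ω => f (Real.sqrt n • (θhat n ω - θstar)) - g (Real.sqrt n • u n ω θstar))
      simpa only [Real.norm_eq_abs] using h
    calc ‖(∫ ω, f (Real.sqrt n • (θhat n ω - θstar)) ∂μ)
          - ∫ ω, g (Real.sqrt n • u n ω θstar) ∂μ‖
        = |∫ ω, (f (Real.sqrt n • (θhat n ω - θstar))
            - g (Real.sqrt n • u n ω θstar)) ∂μ| := by
          rw [integral_sub (hfY_int n) hG, Real.norm_eq_abs]
      _ ≤ ∫ ω, |f (Real.sqrt n • (θhat n ω - θstar))
            - g (Real.sqrt n • u n ω θstar)| ∂μ := habs1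
      _ ≤ ∫ ω, (ε₁ + U.indicator (fun _ => 2 * F) ω) ∂μ :=
          integral_mono ((hfY_int n).sub hG).abs hint2 hpoint
      _ = ε₁ + (μ U).toReal • (2 * F) := by
          rw [integral_add (integrable_const ε₁)
            ((integrable_const (2 * F)).indicator hUmeas),
            integral_const, integral_indicator_const _ hUmeas]
          simp [Measure.real]
      _ ≤ ε₁ + (εM + ((p:ℝ)^2 + 3) * εs) * (2 * F) := by
          rw [smul_eq_mul]
          have h2F : (0:ℝ) ≤ 2 * F := by positivity
          have h6 := mul_le_mul_of_nonneg_right hUVal h2F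
          linarith
      _ < ε := by
          have hpne : ((p:ℝ)^2 + 3) ≠ 0 := by positivity
          have h1 : εM * (2 * F) = ε / 8 := by
            rw [hεM]
            field_simp
            ring
          have h2 : ((p:ℝ)^2 + 3) * εs * (2 * F) = ε / 8 := by
            rw [hεs]
            field_simp
            ring
          have h3 : (εM + ((p:ℝ)^2 + 3) * εs) * (2 * F)
              = εM * (2 * F) + ((p:ℝ)^2 + 3) * εs * (2 * F) := by ring
          rw [hε₁]
          linarith
  have h2 : ∫ x, g x ∂γK = ∫ x, f ((-Ainv) x) ∂γK := by
    simp only [hgapp]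
  have hfinal := hdiff.add hgTend
  rw [zero_add] at hfinal
  have heq : (fun n : ℕ => ∫ ω, f ((Real.sqrt n) • (θhat n ω - θstar)) ∂μ)
      = fun n : ℕ => ((∫ ω, f ((Real.sqrt n) • (θhat n ω - θstar)) ∂μ)
          - ∫ ω, g ((Real.sqrt n) • u n ω θstar) ∂μ)
        + ∫ ω, g ((Real.sqrt n) • u n ω θstar) ∂μ := by
    funext n
    ring
  rw [heq, hlim, ← h2]
  exact hfinal
end
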